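/- For every natural number n with 3 ≤ n, one has Real.pi − (n : ℝ) * Real.sin (Real.pi / n) < (Real.pi − ((n : ℝ)/2) * Real.sin (2 * Real.pi / n)) / 2. -/

import Mathlib

open Real

lemma key_ineq {θ : ℝ} (h0 : 0 < θ) (h3 : θ ≤ π / 3) :
    θ < Real.sin θ * (2 - Real.cos θ) := by
  set f : ℝ → ℝ := fun x => Real.sin x * (2 - Real.cos x) - x with hf
  have hmono : StrictMonoOn f (Set.Icc 0 (π / 3)) := by
    apply strictMonoOn_of_deriv_pos (convex_Icc _ _)
    · fun_prop
    · intro x hx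
      rw [interior_Icc] at hx
      have hx0 : 0 < x := hx.1
      have hx3 : x < π / 3 := hx.2
      have hxpi2 : x < π / 2 := by
        have := Real.pi_pos; linarith
      have hcos_pos : 0 < Real.cos x := Real.cos_pos_of_mem_Ioo ⟨by linarith [Real.pi_pos], hxpi2⟩
      have hcos_lt : Real.cos x < 1 := by
        have := Real.strictAntiOn_cos (a := 0) (b := x)
          ⟨le_refl 0, by linarith [Real.pi_pos]⟩
          ⟨le_of_lt hx0, by linarith [Real.pi_pos]⟩ hx0
        simpa using this
      have hd : HasDerivAt f (Real.cos x * (2 - Real.cos x) + Real.sin x * Real.sin x - 1) x := by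
        have h1 : HasDerivAt (fun x => Real.sin x * (2 - Real.cos x))
            (Real.cos x * (2 - Real.cos x) + Real.sin x * (0 - (-Real.sin x))) x :=
          (Real.hasDerivAt_sin x).mul ((hasDerivAt_const x (2:ℝ)).sub (Real.hasDerivAt_cos x))
        have h2 := h1.sub (hasDerivAt_id x)
        rw [show (0:ℝ) - -Real.sin x = Real.sin x by ring] at h2
        exact h2
      rw [hd.deriv]
      have hpyth := Real.sin_sq_add_cos_sq x
      nlinarith [hpyth, hcos_pos, hcos_lt]
  have h := hmono (Set.left_mem_Icc.2 (by linarith)) ⟨le_of_lt h0, h3⟩ h0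
  simp only [f, Real.sin_zero, Real.cos_zero] at h
  linarith

/-- Passing from the inscribed regular n-gon to the inscribed regular 2n-gon removes
more than half of the area remaining between the polygon and the circle. -/
theorem inscribed_doubling_step (n : ℕ) (hn : 3 ≤ n) :
    Real.pi - (n : ℝ) * Real.sin (Real.pi / n) <
      (Real.pi - ((n : ℝ) / 2) * Real.sin (2 * Real.pi / n)) / 2 := by
  have hn' : (3 : ℝ) ≤ (n : ℝ) := by exact_mod_cast hn
  have hnpos : (0 : ℝ) < n := by linarith
  set θ : ℝ := π / n with hθ
  have hθpos : 0 < θ := div_pos Real.pi_pos hnpos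
  have hθle : θ ≤ π / 3 :=
    div_le_div_of_nonneg_left Real.pi_pos.le (by norm_num) hn'
  have hkey := key_ineq hθpos hθle
  have hsin2 : Real.sin (2 * π / n) = 2 * Real.sin θ * Real.cos θ := by
    rw [show 2 * π / n = 2 * θ by rw [hθ]; ring, Real.sin_two_mul]
  have hπ : (n : ℝ) * θ = π := by
    rw [hθ]; field_simp [hnpos.ne']
  rw [hsin2]
  have := mul_lt_mul_of_pos_left hkey hnpos
  nlinarith [this, hπ]
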